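/- Let G be a simple graph and v a vertex of G. The card G−v is ds-completable if and only if every vertex u ≠ v that is not adjacent to v has degree (in G) different from d_w − 1 for all neighbours w of v. Equivalently, letting D_v = {u : d_u = d_w − 1 for some w ∈ N(v)} and N[v] the closed neighbourhood of v, the card G−v is ds-completable iff D_v ⊆ N[v]. -/

import Mathlib

open SimpleGraph Finset
open scoped Classical

variable {V : Type*}

/-- The degree of a vertex `u` in a simple graph `G`. -/
noncomputable def deg (G : SimpleGraph V) (u : V) : ℕ := (G.neighborSet u).ncard

/-- The degree of `u` in the card `G − v` (the vertex-deleted subgraph at `v`). -/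
noncomputable def cardDeg (G : SimpleGraph V) (v u : V) : ℕ := (G.neighborSet u \ {v}).ncard

/-- The card `G − v` is ds-completable: for each degree `d`, the vertices of degree `d`
in `G − v` are either all neighbours of `v` in `G` or all non-neighbours of `v` in `G`. -/
def DsCompletable (G : SimpleGraph V) (v : V) : Prop :=
  ∀ d : ℕ, (∀ u, u ≠ v → cardDeg G v u = d → G.Adj v u) ∨
           (∀ u, u ≠ v → cardDeg G v u = d → ¬ G.Adj v u)

/-- A vertex is bad if the graph contains a vertex of degree one less. -/
def Bad (G : SimpleGraph V) (v : V) : Prop := ∃ w, deg G w + 1 = deg G v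

/-- A vertex is dull if the graph contains a vertex of degree one more. -/
def Dull (G : SimpleGraph V) (v : V) : Prop := ∃ w, deg G w = deg G v + 1

/-- ε(s,t): the number of stubs on `s` used by edges from `s` to `t`
(for disjoint `s`, `t` this is the number of edges between them; for `s = t`
it is twice the number of edges inside `s`). -/
noncomputable def stubs (G : SimpleGraph V) (s t : Finset V) : ℕ :=
  ((s ×ˢ t).filter fun p => G.Adj p.1 p.2).card

/-- A vertex set is neighbourly if no vertex outside the set has a degree one less
than that of a vertex in the set. -/
def Neighbourly (G : SimpleGraph V) (K : Finset V) : Prop :=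
  ∀ u ∉ K, ∀ w ∈ K, deg G u + 1 ≠ deg G w

/-- A vertex set is `d`-neighbourly if it contains a vertex `v` of degree `d` such that
no vertex outside the set has a degree one less than that of any member other than `v`. -/
def DNeighbourly (G : SimpleGraph V) (d : ℕ) (K : Finset V) : Prop :=
  ∃ v ∈ K, deg G v = d ∧ ∀ u ∉ K, ∀ w ∈ K, w ≠ v → deg G u + 1 ≠ deg G w


lemma cardDeg_of_not_adj [Fintype V] (G : SimpleGraph V) {v u : V} (h : ¬ G.Adj v u) :
    cardDeg G v u = deg G u := by
  unfold cardDeg deg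
  congr 1
  rw [Set.diff_singleton_eq_self]
  intro hv
  exact h (G.adj_symm hv)

lemma cardDeg_of_adj [Fintype V] (G : SimpleGraph V) {v u : V} (h : G.Adj v u) :
    cardDeg G v u + 1 = deg G u := by
  unfold cardDeg deg
  have hv : v ∈ G.neighborSet u := G.adj_symm h
  have hfin : (G.neighborSet u).Finite := Set.toFinite _
  rw [Set.ncard_diff_singleton_add_one hv hfin]

/-- Mulla's criterion: the card `G − v` is ds-completable iff every non-neighbour `u ≠ v`
of `v` has degree different from `d_w − 1` for every neighbour `w` of `v`. -/
theorem stmt3 [Fintype V] (G : SimpleGraph V) (v : V) :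
    DsCompletable G v ↔
      ∀ u : V, u ≠ v → ¬ G.Adj v u → ∀ w : V, G.Adj v w → deg G u + 1 ≠ deg G w := by
  constructor
  · intro hds u hu hnadj w hadj heq
    have hwv : w ≠ v := fun h => G.loopless.irrefl v (h ▸ hadj)
    have hcu : cardDeg G v u = deg G u := cardDeg_of_not_adj G hnadj
    have hcw : cardDeg G v w + 1 = deg G w := cardDeg_of_adj G hadj
    have hcw' : cardDeg G v w = deg G u := by omega
    rcases hds (deg G u) with h | h
    · exact hnadj (h u hu hcu)
    · exact h w hwv hcw' hadj
  · intro H d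
    by_contra hc
    push_neg at hc
    obtain ⟨⟨u, hu, hcu, hnadj⟩, w, hw, hcw, hadj⟩ := hc
    have h1 : cardDeg G v u = deg G u := cardDeg_of_not_adj G hnadj
    have h2 : cardDeg G v w + 1 = deg G w := cardDeg_of_adj G hadj
    exact H u hu hnadj w hadj (by omega)
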